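/- For every H ∈ (1/2, 1), the determinant D_{2,1}^*(H) := ρ_1(1 + ρ_4) − ρ_2(ρ_1 + ρ_3) is strictly positive, where ρ_k = ρ_k(H). -/

import Mathlib

open Real Set Finset

/-- Autocovariance function of fractional Gaussian noise with Hurst parameter `H`:
`ρ_k(H) = ((k+1)^{2H} − 2·k^{2H} + (k−1)^{2H})/2` for `k ≥ 1`, and `ρ_0(H) = 1`. -/
noncomputable def rho (H : ℝ) (k : ℕ) : ℝ :=
  if k = 0 then 1
  else (((k : ℝ) + 1) ^ (2 * H) - 2 * (k : ℝ) ^ (2 * H) + ((k : ℝ) - 1) ^ (2 * H)) / 2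

private lemma hderiv_exp_mul (c t : ℝ) :
    HasDerivAt (fun x => Real.exp (x * c)) (c * Real.exp (t * c)) t := by
  simpa [mul_comm, Function.comp_def] using (Real.hasDerivAt_exp (t*c)).comp t ((hasDerivAt_id t).mul_const c)

private lemma rpow94_le {x q : ℝ} (hx : 0 < x) (hq : 0 ≤ q) (h : x^(9:ℕ) ≤ q^(4:ℕ)) :
    x ^ ((9:ℝ)/4) ≤ q := by
  apply le_of_pow_le_pow_left₀ (by norm_num : (4:ℕ) ≠ 0) hq
  calc (x ^ ((9:ℝ)/4))^(4:ℕ) = x ^ (((9:ℝ)/4) * (4:ℕ)) := by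
        rw [← Real.rpow_natCast (x ^ ((9:ℝ)/4)) 4, ← Real.rpow_mul hx.le]
  _ = x ^ (((9:ℕ)):ℝ) := by norm_num
  _ = x ^ (9:ℕ) := Real.rpow_natCast x 9
  _ ≤ q^(4:ℕ) := h

private lemma le_rpow94 {x q : ℝ} (hx : 0 < x) (h : q^(4:ℕ) ≤ x^(9:ℕ)) :
    q ≤ x ^ ((9:ℝ)/4) := by
  apply le_of_pow_le_pow_left₀ (by norm_num : (4:ℕ) ≠ 0) (Real.rpow_pos_of_pos hx _).le
  calc q^(4:ℕ) ≤ x ^ (9:ℕ) := h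
  _ = x ^ (((9:ℕ)):ℝ) := (Real.rpow_natCast x 9).symm
  _ = x ^ (((9:ℝ)/4) * (4:ℕ)) := by norm_num
  _ = (x ^ ((9:ℝ)/4))^(4:ℕ) := by
        rw [← Real.rpow_natCast (x ^ ((9:ℝ)/4)) 4, ← Real.rpow_mul hx.le]

private lemma log32_bounds : 0.402129 ≤ Real.log (3/2) ∧ Real.log (3/2) ≤ 0.409074 := by
  have h98u : Real.log (9/8) ≤ 1/8 := by
    have := Real.log_le_sub_one_of_pos (by norm_num : (0:ℝ) < 9/8); linarith
  have h98l : (1/9 : ℝ) ≤ Real.log (9/8) := by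
    have := Real.log_le_sub_one_of_pos (by norm_num : (0:ℝ) < 8/9)
    have h : Real.log (9/8) = -Real.log (8/9) := by
      rw [← Real.log_inv]; norm_num
    rw [h]; linarith
  have hsplit : (2:ℝ) * Real.log (3/2) = Real.log 2 + Real.log (9/8) := by
    have h1 : Real.log (((3:ℝ)/2)^(2:ℕ)) = 2 * Real.log (3/2) := by
      rw [Real.log_pow]; push_cast; ring
    have h2 : (((3:ℝ)/2)^(2:ℕ)) = 2 * (9/8) := by norm_num
    rw [← h1, h2, Real.log_mul (by norm_num) (by norm_num)]
  have l2l := Real.log_two_gt_d9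
  have l2u := Real.log_two_lt_d9
  constructor <;> nlinarith

private lemma log3_bounds : 1.095276 ≤ Real.log 3 ∧ Real.log 3 ≤ 1.1022212 := by
  have h : Real.log 3 = Real.log 2 + Real.log (3/2) := by
    rw [← Real.log_mul (by norm_num) (by norm_num)]; norm_num
  have h32 := log32_bounds
  have l2l := Real.log_two_gt_d9
  have l2u := Real.log_two_lt_d9
  constructor <;> rw [h] <;> linarith [h32.1, h32.2]

private lemma log43_bounds : 0.284073 ≤ Real.log (4/3) ∧ Real.log (4/3) ≤ 0.291019 := by
  have h : Real.log (4/3) = 2 * Real.log 2 - Real.log 3 := by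
    have h0 : (4:ℝ)/3 = 2^(2:ℕ) / 3 := by norm_num
    rw [h0, Real.log_div (by norm_num) (by norm_num), Real.log_pow]
    push_cast; ring
  have h3 := log3_bounds
  have l2l := Real.log_two_gt_d9
  have l2u := Real.log_two_lt_d9
  constructor <;> rw [h] <;> linarith [h3.1, h3.2]

private lemma log53_ge : 1/2 ≤ Real.log (5/3) := by
  rw [Real.le_log_iff_exp_le (by norm_num : (0:ℝ) < 5/3)]
  have h2 : Real.exp (1/2) ^ (2:ℕ) = Real.exp 1 := by
    rw [← Real.exp_nat_mul]; norm_num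
  nlinarith [Real.exp_one_lt_d9, Real.exp_pos (1/2 : ℝ)]

set_option maxHeartbeats 2000000 in
private lemma L4 (a : ℝ) (ha1 : 1 < a) (ha2 : a < 2) :
    0 ≤ (5:ℝ)^a - 3 * 4^a + 3 * 3^a - 2 * 2^a + 4 := by
  set l5 : ℝ := Real.log (5/3) with hl5def
  set l4 : ℝ := Real.log (4/3) with hl4def
  set l2 : ℝ := Real.log (2/3) with hl2def
  set c3 : ℝ := -Real.log 3 with hc3def
  set G : ℝ → ℝ := fun t => Real.exp (t * l5) - 3 * Real.exp (t * l4) + 3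
      - 2 * Real.exp (t * l2) + 4 * Real.exp (t * c3) with hGdef
  have hl2eq : l2 = -Real.log (3/2) := by rw [hl2def, ← Real.log_inv]; norm_num
  have h32 := log32_bounds
  have h3b := log3_bounds
  have h43 := log43_bounds
  have hl5b := log53_ge
  -- derivatives
  have hd1 : ∀ t, HasDerivAt G (l5 * Real.exp (t * l5) - 3 * (l4 * Real.exp (t * l4))
      - 2 * (l2 * Real.exp (t * l2)) + 4 * (c3 * Real.exp (t * c3))) t := fun t =>
    ((((hderiv_exp_mul l5 t).sub ((hderiv_exp_mul l4 t).const_mul 3)).add_const 3).sub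
      ((hderiv_exp_mul l2 t).const_mul 2)).add ((hderiv_exp_mul c3 t).const_mul 4)
  have hderiv1 : deriv G = fun t => l5 * Real.exp (t * l5) - 3 * (l4 * Real.exp (t * l4))
      - 2 * (l2 * Real.exp (t * l2)) + 4 * (c3 * Real.exp (t * c3)) :=
    funext fun t => (hd1 t).deriv
  have hd2 : ∀ t, HasDerivAt (deriv G) (l5 * (l5 * Real.exp (t * l5))
      - 3 * (l4 * (l4 * Real.exp (t * l4))) - 2 * (l2 * (l2 * Real.exp (t * l2)))
      + 4 * (c3 * (c3 * Real.exp (t * c3)))) t := by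
    intro t
    rw [hderiv1]
    exact (((((hderiv_exp_mul l5 t).const_mul l5).sub
      (((hderiv_exp_mul l4 t).const_mul l4).const_mul 3)).sub
      (((hderiv_exp_mul l2 t).const_mul l2).const_mul 2)).add
      (((hderiv_exp_mul c3 t).const_mul c3).const_mul 4))
  -- convexity on [1, 9/4]
  have hl5pos : (0:ℝ) < l5 := by linarith
  have hl4pos : (0:ℝ) < l4 := by linarith [h43.1]
  have hl2neg : l2 < 0 := by rw [hl2eq]; linarith [h32.1]
  have hc3neg : c3 < 0 := by rw [hc3def]; linarith [h3b.1]
  have hconv : ConvexOn ℝ (Icc (1:ℝ) (9/4)) G := by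
    apply convexOn_of_deriv2_nonneg (convex_Icc 1 (9/4))
    · exact Continuous.continuousOn (by continuity)
    · exact fun x _ => (hd1 x).differentiableAt.differentiableWithinAt
    · exact fun x _ => (hd2 x).differentiableAt.differentiableWithinAt
    · intro x hx
      rw [interior_Icc] at hx
      have hx1 : 1 ≤ x := hx.1.le
      have hx2 : x ≤ 9/4 := hx.2.le
      have hiter : deriv^[2] G x = l5 * (l5 * Real.exp (x * l5))
          - 3 * (l4 * (l4 * Real.exp (x * l4))) - 2 * (l2 * (l2 * Real.exp (x * l2)))
          + 4 * (c3 * (c3 * Real.exp (x * c3))) := by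
        simp only [Function.iterate_succ, Function.iterate_zero, Function.comp_apply, id_eq]
        exact (hd2 x).deriv
      rw [hiter]
      -- bounds on the exponentials
      have hA : (5:ℝ)/3 ≤ Real.exp (x * l5) := by
        have : Real.exp l5 ≤ Real.exp (x * l5) :=
          Real.exp_le_exp.2 (by nlinarith)
        rwa [hl5def, Real.exp_log (by norm_num : (0:ℝ) < 5/3)] at this
      have hB : Real.exp (x * l4) ≤ 86/45 := by
        have h1 : Real.exp (x * l4) ≤ Real.exp ((9/4) * l4) :=
          Real.exp_le_exp.2 (by nlinarith)
        have h2 : Real.exp ((9/4) * l4) = (4/3 : ℝ) ^ ((9:ℝ)/4) := by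
          rw [Real.rpow_def_of_pos (by norm_num : (0:ℝ) < 4/3), hl4def, mul_comm]
        have h3 : (4/3 : ℝ) ^ ((9:ℝ)/4) ≤ 86/45 :=
          rpow94_le (by norm_num) (by norm_num) (by norm_num)
        linarith
      have hC : Real.exp (x * l2) ≤ 2/3 := by
        have h1 : Real.exp (x * l2) ≤ Real.exp l2 :=
          Real.exp_le_exp.2 (by nlinarith)
        rwa [hl2def, Real.exp_log (by norm_num : (0:ℝ) < 2/3)] at h1
      have hD : (1:ℝ)/12 ≤ Real.exp (x * c3) := by
        have h1 : Real.exp ((9/4) * c3) ≤ Real.exp (x * c3) :=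
          Real.exp_le_exp.2 (by nlinarith)
        have h2 : Real.exp ((9/4) * c3) = ((3:ℝ) ^ ((9:ℝ)/4))⁻¹ := by
          rw [hc3def, mul_neg, Real.exp_neg,
            Real.rpow_def_of_pos (by norm_num : (0:ℝ) < 3), mul_comm]
        have h3 : (3:ℝ) ^ ((9:ℝ)/4) ≤ 12 :=
          rpow94_le (by norm_num) (by norm_num) (by norm_num)
        have h4 : (0:ℝ) < (3:ℝ) ^ ((9:ℝ)/4) := Real.rpow_pos_of_pos (by norm_num) _
        have h5 : (1:ℝ)/12 ≤ ((3:ℝ) ^ ((9:ℝ)/4))⁻¹ := by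
          rw [le_inv_comm₀ (by norm_num) h4] <;> try linarith
        linarith [h2 ▸ h1, h5]
      -- coefficient bounds
      have hsqA : (1:ℝ)/4 ≤ l5 * l5 := by nlinarith [hl5b]
      have t1 : (1:ℝ)/4 * (5/3) ≤ (l5 * l5) * Real.exp (x * l5) :=
        mul_le_mul hsqA hA (by norm_num) (by nlinarith [hl5b])
      have hsqB : l4 * l4 ≤ 0.291019^2 := by nlinarith [h43.1, h43.2]
      have t2 : (l4 * l4) * Real.exp (x * l4) ≤ 0.291019^2 * (86/45) :=
        mul_le_mul hsqB hB (Real.exp_pos _).le (by norm_num)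
      have hsqC : l2 * l2 ≤ 0.409074^2 := by
        rw [hl2eq]; nlinarith [h32.1, h32.2]
      have t3 : (l2 * l2) * Real.exp (x * l2) ≤ 0.409074^2 * (2/3) :=
        mul_le_mul hsqC hC (Real.exp_pos _).le (by norm_num)
      have hsqD : (1.095276:ℝ)^2 ≤ c3 * c3 := by
        rw [hc3def]; nlinarith [h3b.1]
      have t4 : (1.095276:ℝ)^2 * (1/12) ≤ (c3 * c3) * Real.exp (x * c3) :=
        mul_le_mul hsqD hD (by norm_num) (by nlinarith [hsqD])
      clear_value l5 l4 l2 c3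
      linarith [t1, t2, t3, t4]
  -- values of G
  have e5 : Real.exp l5 = 5/3 := by rw [hl5def, Real.exp_log (by norm_num : (0:ℝ) < 5/3)]
  have e4 : Real.exp l4 = 4/3 := by rw [hl4def, Real.exp_log (by norm_num : (0:ℝ) < 4/3)]
  have e2 : Real.exp l2 = 2/3 := by rw [hl2def, Real.exp_log (by norm_num : (0:ℝ) < 2/3)]
  have e3 : Real.exp c3 = 1/3 := by
    rw [hc3def, Real.exp_neg, Real.exp_log (by norm_num : (0:ℝ) < 3)]; norm_num
  have hG2 : G 2 = 0 := by
    simp only [hGdef]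
    rw [show (2:ℝ) * l5 = l5 + l5 by ring, show (2:ℝ) * l4 = l4 + l4 by ring,
      show (2:ℝ) * l2 = l2 + l2 by ring, show (2:ℝ) * c3 = c3 + c3 by ring,
      Real.exp_add, Real.exp_add, Real.exp_add, Real.exp_add, e5, e4, e2, e3]
    norm_num
  have hG94 : G (9/4) ≤ 0 := by
    simp only [hGdef]
    have q5 : Real.exp ((9/4) * l5) ≤ 3.157 := by
      have h2 : Real.exp ((9/4) * l5) = (5/3 : ℝ) ^ ((9:ℝ)/4) := by
        rw [Real.rpow_def_of_pos (by norm_num : (0:ℝ) < 5/3), hl5def, mul_comm]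
      rw [h2]; exact rpow94_le (by norm_num) (by norm_num) (by norm_num)
    have q4 : (1.9102:ℝ) ≤ Real.exp ((9/4) * l4) := by
      have h2 : Real.exp ((9/4) * l4) = (4/3 : ℝ) ^ ((9:ℝ)/4) := by
        rw [Real.rpow_def_of_pos (by norm_num : (0:ℝ) < 4/3), hl4def, mul_comm]
      rw [h2]; exact le_rpow94 (by norm_num) (by norm_num)
    have q2 : (0.4016:ℝ) ≤ Real.exp ((9/4) * l2) := by
      have h2 : Real.exp ((9/4) * l2) = (2/3 : ℝ) ^ ((9:ℝ)/4) := by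
        rw [Real.rpow_def_of_pos (by norm_num : (0:ℝ) < 2/3), hl2def, mul_comm]
      rw [h2]; exact le_rpow94 (by norm_num) (by norm_num)
    have q3 : Real.exp ((9/4) * c3) ≤ 4/47.36 := by
      have h2 : Real.exp ((9/4) * c3) = ((3:ℝ) ^ ((9:ℝ)/4))⁻¹ := by
        rw [hc3def, mul_neg, Real.exp_neg,
          Real.rpow_def_of_pos (by norm_num : (0:ℝ) < 3), mul_comm]
      have h3 : (11.84:ℝ) ≤ (3:ℝ) ^ ((9:ℝ)/4) := le_rpow94 (by norm_num) (by norm_num)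
      have h4 : (0:ℝ) < (3:ℝ) ^ ((9:ℝ)/4) := Real.rpow_pos_of_pos (by norm_num) _
      rw [h2]
      rw [show (4:ℝ)/47.36 = (11.84:ℝ)⁻¹ by norm_num]
      exact inv_anti₀ (by norm_num) h3
    linarith
  -- chord argument: G a ≥ 0
  have hamem : a ∈ Icc (1:ℝ) (9/4) := ⟨ha1.le, by linarith⟩
  have hbmem : (9/4:ℝ) ∈ Icc (1:ℝ) (9/4) := by constructor <;> norm_num
  set θ : ℝ := (1/4) / (9/4 - a) with hθdef
  have hs : (0:ℝ) < 9/4 - a := by linarith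
  have hθpos : 0 < θ := by positivity
  have hθle : θ ≤ 1 := by
    rw [hθdef, div_le_one hs]; linarith
  have hcomb := hconv.2 hamem hbmem hθpos.le (by linarith : (0:ℝ) ≤ 1 - θ) (by ring)
  have hpt : θ • a + (1 - θ) • (9/4 : ℝ) = 2 := by
    have hcancel : θ * (9/4 - a) = 1/4 := by
      rw [hθdef]; exact div_mul_cancel₀ _ hs.ne'
    simp only [smul_eq_mul]
    nlinarith [hcancel]
  rw [hpt, hG2] at hcomb
  simp only [smul_eq_mul] at hcomb
  clear_value θ G
  have h2' : 0 ≤ (1 - θ) * (-G (9/4)) := mul_nonneg (by linarith) (by linarith)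
  have h3' : 0 ≤ θ * G a := by nlinarith [hcomb, h2']
  have hGa : 0 ≤ G a := by nlinarith [h3', hθpos]
  -- convert to rpow form
  have h3pos : (0:ℝ) < 3 ^ a := Real.rpow_pos_of_pos (by norm_num) a
  have key : G a * 3 ^ a = 5 ^ a - 3 * 4 ^ a + 3 * 3 ^ a - 2 * 2 ^ a + 4 := by
    simp only [hGdef]
    have E5 : Real.exp (a * l5) = (5:ℝ)^a / 3^a := by
      rw [hl5def, ← Real.log_rpow (by norm_num : (0:ℝ) < 5/3),
        Real.exp_log (Real.rpow_pos_of_pos (by norm_num) a),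
        Real.div_rpow (by norm_num) (by norm_num)]
    have E4 : Real.exp (a * l4) = (4:ℝ)^a / 3^a := by
      rw [hl4def, ← Real.log_rpow (by norm_num : (0:ℝ) < 4/3),
        Real.exp_log (Real.rpow_pos_of_pos (by norm_num) a),
        Real.div_rpow (by norm_num) (by norm_num)]
    have E2 : Real.exp (a * l2) = (2:ℝ)^a / 3^a := by
      rw [hl2def, ← Real.log_rpow (by norm_num : (0:ℝ) < 2/3),
        Real.exp_log (Real.rpow_pos_of_pos (by norm_num) a),
        Real.div_rpow (by norm_num) (by norm_num)]
    have E3 : Real.exp (a * c3) = 1 / (3:ℝ)^a := by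
      rw [hc3def, mul_neg, Real.exp_neg, ← Real.log_rpow (by norm_num : (0:ℝ) < 3),
        Real.exp_log (Real.rpow_pos_of_pos (by norm_num) a)]
      exact (one_div _).symm
    rw [E5, E4, E2, E3]
    field_simp
    try ring
  nlinarith [hGa, h3pos, key, mul_nonneg hGa h3pos.le]


private lemma L3 (a : ℝ) (ha1 : 1 < a) (ha2 : a < 2) : 3 ^ a + 3 < 3 * (2:ℝ) ^ a := by
  set c2 : ℝ := Real.log (2/3) with hc2
  set c3 : ℝ := -Real.log 3 with hc3
  set ψ : ℝ → ℝ := fun t => 3 * Real.exp (t * c2) - 3 * Real.exp (t * c3) with hψ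
  have hd1 : ∀ t, HasDerivAt ψ (3 * (c2 * Real.exp (t * c2)) - 3 * (c3 * Real.exp (t * c3))) t :=
    fun t => ((hderiv_exp_mul c2 t).const_mul 3).sub ((hderiv_exp_mul c3 t).const_mul 3)
  have hderiv1 : deriv ψ = fun t => 3 * (c2 * Real.exp (t * c2)) - 3 * (c3 * Real.exp (t * c3)) :=
    funext fun t => (hd1 t).deriv
  have hd2 : ∀ t, HasDerivAt (deriv ψ)
      (3 * (c2 * (c2 * Real.exp (t * c2))) - 3 * (c3 * (c3 * Real.exp (t * c3)))) t := by
    intro t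
    rw [hderiv1]
    exact (((hderiv_exp_mul c2 t).const_mul c2).const_mul 3).sub
      (((hderiv_exp_mul c3 t).const_mul c3).const_mul 3)
  have hcon : StrictConcaveOn ℝ (Icc (1:ℝ) 2) ψ := by
    apply strictConcaveOn_of_deriv2_neg (convex_Icc 1 2)
    · exact Continuous.continuousOn (by continuity)
    · intro x hx
      rw [interior_Icc] at hx
      have : deriv^[2] ψ x = 3 * (c2 * (c2 * Real.exp (x * c2))) - 3 * (c3 * (c3 * Real.exp (x * c3))) := by
        simp only [Function.iterate_succ, Function.iterate_zero, Function.comp_apply, id_eq]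
        exact (hd2 x).deriv
      rw [this]
      -- need: c2^2 * exp(x*c2) < c3^2 * exp(x*c3)
      have hlog2 : c2 = -Real.log (3/2) := by
        rw [hc2, ← Real.log_inv]; norm_num
      have h1 : Real.exp (x * c2) = Real.exp (x * c3) * Real.exp (x * Real.log 2) := by
        rw [← Real.exp_add]; congr 1
        have : Real.log (2/3) = Real.log 2 - Real.log 3 := by
          rw [Real.log_div (by norm_num) (by norm_num)]
        rw [hc2, hc3, this]; ring
      have h2 : Real.exp (x * Real.log 2) < 4 := by
        have : x * Real.log 2 < Real.log 4 := by
          have h4 : Real.log 4 = 2 * Real.log 2 := by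
            rw [show (4:ℝ) = 2^(2:ℕ) by norm_num, Real.log_pow]; push_cast; ring
          rw [h4]
          have := Real.log_pos (by norm_num : (1:ℝ) < 2)
          nlinarith [hx.2]
        calc Real.exp (x * Real.log 2) < Real.exp (Real.log 4) := Real.exp_lt_exp.2 this
        _ = 4 := Real.exp_log (by norm_num)
      have h3 : 2 * Real.log (3/2) ≤ Real.log 3 := by
        have : Real.log ((3/2)^(2:ℕ)) ≤ Real.log 3 := by
          apply Real.log_le_log (by norm_num)
          norm_num
        rwa [Real.log_pow] at this
        -- log((3/2)^2) = 2 log(3/2)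
      have hl32 : 0 < Real.log (3/2) := Real.log_pos (by norm_num)
      have hexppos := Real.exp_pos (x * c3)
      have hc2sq : c2^2 = (Real.log (3/2))^2 := by rw [hlog2]; ring
      have hc3sq : c3^2 = (Real.log 3)^2 := by rw [hc3]; ring
      have key : c2^2 * Real.exp (x * c2) < c3^2 * Real.exp (x * c3) := by
        rw [h1, hc2sq, hc3sq]
        have : (Real.log (3/2))^2 * (Real.exp (x * c3) * Real.exp (x * Real.log 2))
            < (Real.log (3/2))^2 * (Real.exp (x * c3) * 4) := by
          apply mul_lt_mul_of_pos_left _ (by positivity)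
          exact mul_lt_mul_of_pos_left h2 hexppos
        apply lt_of_lt_of_le this
        have h4 : (Real.log (3/2))^2 * 4 ≤ (Real.log 3)^2 := by nlinarith [hl32]
        nlinarith [hexppos]
      nlinarith [key]
  have h1mem : (1:ℝ) ∈ Icc (1:ℝ) 2 := by norm_num
  have h2mem : (2:ℝ) ∈ Icc (1:ℝ) 2 := by norm_num
  have hmain := hcon.2 h1mem h2mem (by norm_num) (by linarith : 0 < 2 - a)
    (by linarith : 0 < a - 1) (by ring)
  have hpt : (2 - a) • (1:ℝ) + (a - 1) • (2:ℝ) = a := by simp [smul_eq_mul]; ring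
  rw [hpt] at hmain
  have hψ1 : ψ 1 = 1 := by
    simp only [hψ, one_mul]
    rw [hc2, hc3, Real.exp_log (by norm_num), Real.exp_neg, Real.exp_log (by norm_num)]
    norm_num
  have hψ2 : ψ 2 = 1 := by
    simp only [hψ]
    rw [hc2, hc3, show (2:ℝ) * Real.log (2/3) = Real.log (2/3) + Real.log (2/3) by ring,
      show (2:ℝ) * -Real.log 3 = -Real.log 3 + -Real.log 3 by ring,
      Real.exp_add, Real.exp_add, Real.exp_log (by norm_num), Real.exp_neg,
      Real.exp_log (by norm_num)]
    norm_num
  rw [hψ1, hψ2] at hmain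
  have hmain' : 1 < ψ a := by
    have : (2-a) • (1:ℝ) + (a-1) • (1:ℝ) = 1 := by simp [smul_eq_mul]; ring
    rwa [this] at hmain
  -- convert ψ a to rpow form
  have h3pos : (0:ℝ) < 3 ^ a := Real.rpow_pos_of_pos (by norm_num) a
  have hψa : ψ a * 3 ^ a = 3 * 2 ^ a - 3 := by
    simp only [hψ]
    have e1 : Real.exp (a * c2) = (2:ℝ)^a / (3:ℝ)^a := by
      rw [hc2, ← Real.log_rpow (by norm_num : (0:ℝ) < 2/3), Real.exp_log (Real.rpow_pos_of_pos (by norm_num) a)]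
      rw [Real.div_rpow (by norm_num) (by norm_num)]
    have e2 : Real.exp (a * c3) = 1 / (3:ℝ)^a := by
      rw [hc3, mul_neg, Real.exp_neg, ← Real.log_rpow (by norm_num : (0:ℝ) < 3),
        Real.exp_log (Real.rpow_pos_of_pos (by norm_num) a)]
      exact (one_div _).symm
    rw [e1, e2]
    field_simp
    try ring
  nlinarith [hmain', h3pos, hψa]

private lemma rho_conv (a : ℝ) (ha : 1 ≤ a) (k : ℝ) (hk : 1 ≤ k) :
    2 * k ^ a ≤ (k+1) ^ a + (k-1) ^ a := by
  have h := (convexOn_rpow ha).2 (Set.mem_Ici.2 (by linarith : (0:ℝ) ≤ k-1))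
    (Set.mem_Ici.2 (by linarith : (0:ℝ) ≤ k+1)) (by norm_num : (0:ℝ) ≤ 1/2)
    (by norm_num : (0:ℝ) ≤ 1/2) (by norm_num)
  simp only [smul_eq_mul] at h
  have he : (1/2 : ℝ) * (k-1) + (1/2) * (k+1) = k := by ring
  rw [he] at h
  nlinarith [h]

theorem stmt_8 (H : ℝ) (hH : H ∈ Ioo (1 / 2 : ℝ) 1) :
    0 < rho H 1 * (1 + rho H 4) - rho H 2 * (rho H 1 + rho H 3) := by
  obtain ⟨hH1, hH2⟩ := hH
  set a : ℝ := 2 * H with hadef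
  have ha1 : 1 < a := by rw [hadef]; linarith
  have ha2 : a < 2 := by rw [hadef]; linarith
  have ha0 : a ≠ 0 := by linarith
  have hr1 : rho H 1 = ((2:ℝ) ^ a - 2) / 2 := by
    simp only [rho, if_neg (by norm_num : (1:ℕ) ≠ 0)]
    push_cast
    rw [show ((1:ℝ) + 1) = 2 by norm_num, show ((1:ℝ) - 1) = 0 by norm_num,
      Real.one_rpow, Real.zero_rpow ha0]
    ring
  have hr2 : rho H 2 = ((3:ℝ) ^ a - 2 * 2 ^ a + 1) / 2 := by
    simp only [rho, if_neg (by norm_num : (2:ℕ) ≠ 0)]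
    push_cast
    rw [show ((2:ℝ) + 1) = 3 by norm_num, show ((2:ℝ) - 1) = 1 by norm_num, Real.one_rpow]
  have hr3 : rho H 3 = ((4:ℝ) ^ a - 2 * 3 ^ a + 2 ^ a) / 2 := by
    simp only [rho, if_neg (by norm_num : (3:ℕ) ≠ 0)]
    push_cast
    rw [show ((3:ℝ) + 1) = 4 by norm_num, show ((3:ℝ) - 1) = 2 by norm_num]
  have hr4 : rho H 4 = ((5:ℝ) ^ a - 2 * 4 ^ a + 3 ^ a) / 2 := by
    simp only [rho, if_neg (by norm_num : (4:ℕ) ≠ 0)]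
    push_cast
    rw [show ((4:ℝ) + 1) = 5 by norm_num, show ((4:ℝ) - 1) = 3 by norm_num]
  have hc2 : 2 * (2:ℝ) ^ a ≤ 3 ^ a + 1 := by
    have := rho_conv a ha1.le 2 (by norm_num)
    rw [show (2:ℝ) + 1 = 3 by norm_num, show (2:ℝ) - 1 = 1 by norm_num, Real.one_rpow] at this
    linarith
  have hc4 : 2 * (4:ℝ) ^ a ≤ 5 ^ a + 3 ^ a := by
    have := rho_conv a ha1.le 4 (by norm_num)
    rw [show (4:ℝ) + 1 = 5 by norm_num, show (4:ℝ) - 1 = 3 by norm_num] at this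
    linarith
  have hL3 := L3 a ha1 ha2
  have hL4 := L4 a ha1 ha2
  rw [hr1, hr2, hr3, hr4]
  have hP1 : 0 < (((2:ℝ) ^ a - 2) / 2 - ((3:ℝ) ^ a - 2 * 2 ^ a + 1) / 2)
      * (1 + ((5:ℝ) ^ a - 2 * 4 ^ a + 3 ^ a) / 2) := by
    apply mul_pos
    · linarith
    · linarith
  have hP2 : 0 ≤ (((3:ℝ) ^ a - 2 * 2 ^ a + 1) / 2)
      * (1 + ((5:ℝ) ^ a - 2 * 4 ^ a + 3 ^ a) / 2
        - ((2:ℝ) ^ a - 2) / 2 - ((4:ℝ) ^ a - 2 * 3 ^ a + 2 ^ a) / 2) := by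
    apply mul_nonneg
    · linarith
    · linarith
  nlinarith [hP1, hP2]
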